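/- arXiv:2409.11631 — 2 statements merged into one kernel-verified Lean document; each statement's English description precedes it below -/
import Mathlib

section
/- Let b ≠ c be positive reals, N > 0, x₀, y₀ > 0. Define z(t) = N − (x₀ + y₀)^(b/(b-c))·(x₀ + y₀e^((b-c)t))^(-c/(b-c)) and y(t) = y₀(1 + y₀/x₀)^(b/(b-c))(1 + (y₀/x₀)e^((b-c)t))^(-b/(b-c))e^((b-c)t). Then z is differentiable and z'(t) = c·y(t) for all t, provided additionally x₀ + y₀ = (x₀ + y₀)^(b/(b-c))·(x₀+y₀)^(-c/(b-c)) holds (which is automatic since b/(b-c) − c/(b-c) = 1). -/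
theorem sir_removed_solves_ode
    (b c N x₀ y₀ : ℝ) (hb : 0 < b) (hc : 0 < c) (hbc : b ≠ c) (hN : 0 < N)
    (hx : 0 < x₀) (hy : 0 < y₀)
    (hid : x₀ + y₀ = (x₀ + y₀) ^ (b / (b - c)) * (x₀ + y₀) ^ (-(c / (b - c)))) :
    ∀ t : ℝ,
      HasDerivAt (fun t : ℝ =>
          N - (x₀ + y₀) ^ (b / (b - c)) *
            (x₀ + y₀ * Real.exp ((b - c) * t)) ^ (-(c / (b - c))))
        (c *
          (y₀ * (1 + y₀ / x₀) ^ (b / (b - c)) *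
            (1 + (y₀ / x₀) * Real.exp ((b - c) * t)) ^ (-(b / (b - c))) *
            Real.exp ((b - c) * t))) t := by
  intro t
  have hbc' : b - c ≠ 0 := sub_ne_zero.mpr hbc
  set E := Real.exp ((b - c) * t) with hE
  have hEpos : 0 < E := Real.exp_pos _
  have hu : 0 < x₀ + y₀ * E := by positivity
  have h1 : HasDerivAt (fun t : ℝ => (b - c) * t) (b - c) t := by
    simpa using (hasDerivAt_id t).const_mul (b - c)
  have h2 : HasDerivAt (fun t : ℝ => x₀ + y₀ * Real.exp ((b - c) * t))
      (y₀ * (E * (b - c))) t := ((h1.exp.const_mul y₀).const_add x₀)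
  have h3 := (h2.rpow_const (p := -(c / (b - c))) (Or.inl hu.ne'))
  have h4 := (h3.const_mul ((x₀ + y₀) ^ (b / (b - c)))).const_sub N
  convert h4 using 1
  case e'_4 => rfl
  case e'_5 => rfl
  -- value equality
  have key : (1 + y₀ / x₀) ^ (b / (b - c)) *
      (1 + (y₀ / x₀) * E) ^ (-(b / (b - c)))
      = (x₀ + y₀) ^ (b / (b - c)) * (x₀ + y₀ * E) ^ (-(b / (b - c))) := by
    have e1 : (1 : ℝ) + y₀ / x₀ = (x₀ + y₀) / x₀ := by field_simp
    have e2 : (1 : ℝ) + (y₀ / x₀) * E = (x₀ + y₀ * E) / x₀ := by field_simp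
    rw [e1, e2, Real.div_rpow (by positivity) hx.le,
      Real.div_rpow (by positivity) hx.le, Real.rpow_neg hx.le,
      Real.rpow_neg hu.le]
    field_simp
  have expo : -(c / (b - c)) - 1 = -(b / (b - c)) := by field_simp; ring
  rw [expo, ← hE]
  calc c * (y₀ * (1 + y₀ / x₀) ^ (b / (b - c)) * (1 + y₀ / x₀ * E) ^ (-(b / (b - c))) * E)
      = c * y₀ * E * ((1 + y₀ / x₀) ^ (b / (b - c)) * (1 + y₀ / x₀ * E) ^ (-(b / (b - c)))) := by ring
    _ = c * y₀ * E * ((x₀ + y₀) ^ (b / (b - c)) * (x₀ + y₀ * E) ^ (-(b / (b - c)))) := by rw [key]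
    _ = -((x₀ + y₀) ^ (b / (b - c)) *
        (y₀ * (E * (b - c)) * -(c / (b - c)) * (x₀ + y₀ * E) ^ (-(b / (b - c))))) := by
        field_simp
end

section
/- Let b > c > 0 and x, y > 0. The semigroup property holds for the closed-form SIR susceptible update: if F(x, y, Δ) = (x·u, y·u·e^((b-c)Δ)) where u = (1 + y/x)^(b/(b-c))(1 + (y/x)e^((b-c)Δ))^(-b/(b-c)), then F(F(x, y, Δ₁), Δ₂) = F(x, y, Δ₁ + Δ₂) for all Δ₁, Δ₂ ≥ 0. -/
noncomputable def sirFlow (b c : ℝ) (p : ℝ × ℝ) (Δ : ℝ) : ℝ × ℝ :=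
  let u := (1 + p.2 / p.1) ^ (b / (b - c)) *
    (1 + (p.2 / p.1) * Real.exp ((b - c) * Δ)) ^ (-(b / (b - c)))
  (p.1 * u, p.2 * u * Real.exp ((b - c) * Δ))

theorem sir_flow_semigroup
    (b c x y : ℝ) (hc : 0 < c) (hcb : c < b) (hx : 0 < x) (hy : 0 < y) :
    ∀ Δ₁ Δ₂ : ℝ, 0 ≤ Δ₁ → 0 ≤ Δ₂ →
      sirFlow b c (sirFlow b c (x, y) Δ₁) Δ₂ = sirFlow b c (x, y) (Δ₁ + Δ₂) := by
  intro Δ₁ Δ₂ _ _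
  have hk : (0:ℝ) < b - c := sub_pos.mpr hcb
  set α := b / (b - c) with hα
  set r := y / x with hr
  have hrpos : 0 < r := div_pos hy hx
  set E1 := Real.exp ((b - c) * Δ₁) with hE1
  set E2 := Real.exp ((b - c) * Δ₂) with hE2
  have hE1pos : 0 < E1 := Real.exp_pos _
  have hE2pos : 0 < E2 := Real.exp_pos _
  have hE12 : Real.exp ((b - c) * (Δ₁ + Δ₂)) = E1 * E2 := by
    rw [hE1, hE2, ← Real.exp_add]; ring_nf
  have hA : (0:ℝ) < 1 + r := by linarith
  have hB : (0:ℝ) < 1 + r * E1 := by positivity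
  have hC : (0:ℝ) < 1 + r * (E1 * E2) := by positivity
  set u₁ := (1 + r) ^ α * (1 + r * E1) ^ (-α) with hu₁
  have hu₁pos : 0 < u₁ := by
    apply mul_pos <;> exact Real.rpow_pos_of_pos (by assumption) _
  simp only [sirFlow, hE12]
  have hratio : y * u₁ * E1 / (x * u₁) = r * E1 := by
    field_simp [hr]; rw [hr]; field_simp
  simp only [hu₁, hr, hα, hE1] at hratio
  simp only [hratio]
  rw [Prod.mk.injEq, ← hr, ← hα, ← hE1, ← hE2]
  have hcancel : (1 + r * E1) ^ (-α) * ((1 + r * E1) ^ α) = 1 := by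
    rw [← Real.rpow_add hB]; simp
  constructor
  · rw [show 1 + r * E1 * E2 = 1 + r * (E1 * E2) by ring]
    calc x * ((1 + r) ^ α * (1 + r * E1) ^ (-α)) *
          ((1 + r * E1) ^ α * (1 + r * (E1 * E2)) ^ (-α))
        = x * ((1 + r) ^ α * ((1 + r * E1) ^ (-α) * (1 + r * E1) ^ α) *
            (1 + r * (E1 * E2)) ^ (-α)) := by ring
      _ = _ := by rw [hcancel]; ring_nf
  · rw [show 1 + r * E1 * E2 = 1 + r * (E1 * E2) by ring]
    calc y * ((1 + r) ^ α * (1 + r * E1) ^ (-α)) * E1 *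
          ((1 + r * E1) ^ α * (1 + r * (E1 * E2)) ^ (-α)) * E2
        = y * ((1 + r) ^ α * ((1 + r * E1) ^ (-α) * (1 + r * E1) ^ α) *
            (1 + r * (E1 * E2)) ^ (-α)) * (E1 * E2) := by ring
      _ = _ := by rw [hcancel]; ring_nf
end
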